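/- The ring Z/nZ (n ≥ 1) is a meadow (every element has a generalized inverse) if and only if n is squarefree. -/

import Mathlib

lemma field_gen_inv {K : Type*} [Field K] (x : K) :
    ∃ y : K, x * x * y = x ∧ y * y * x = y := by
  rcases eq_or_ne x 0 with rfl | hx
  · exact ⟨0, by simp, by simp⟩
  · exact ⟨x⁻¹, by field_simp, by field_simp⟩

/-- Z/nZ (n ≥ 1) is a meadow iff n is squarefree. -/
theorem zmod_meadow_iff_squarefree (n : ℕ) (hn : 1 ≤ n) :
    (∀ x : ZMod n, ∃ y : ZMod n, x * x * y = x ∧ y * y * x = y) ↔ Squarefree n := by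
  haveI : NeZero n := ⟨by omega⟩
  constructor
  · intro h
    have hred : IsReduced (ZMod n) := by
      rw [isReduced_iff_pow_one_lt 2 one_lt_two]
      intro x hx
      obtain ⟨y, h1, _⟩ := h x
      rw [pow_two] at hx
      rw [hx, zero_mul] at h1
      exact h1.symm
    rcases isReduced_zmod.mp hred with h | h
    · exact h
    · omega
  · intro hsq
    haveI : IsReduced (ZMod n) := isReduced_zmod.mpr (Or.inl hsq)
    letI := IsArtinianRing.fieldOfSubtypeIsMaximal (ZMod n)
    intro x
    let e := IsArtinianRing.equivPi (ZMod n)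
    have key : ∀ z : (∀ I : MaximalSpectrum (ZMod n), ZMod n ⧸ I.asIdeal),
        ∃ w, z * z * w = z ∧ w * w * z = w := by
      intro z
      choose w hw1 hw2 using fun I : MaximalSpectrum (ZMod n) => @field_gen_inv (ZMod n ⧸ I.asIdeal) (Ideal.Quotient.field I.asIdeal) (z I)
      exact ⟨w, funext hw1, funext hw2⟩
    obtain ⟨w, hw1, hw2⟩ := key (e x)
    refine ⟨e.symm w, ?_, ?_⟩
    · have := congrArg e.symm hw1
      simpa [map_mul] using this
    · have := congrArg e.symm hw2
      simpa [map_mul] using this
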